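/- Local reasoning III: Suppose the interface I := Comp(f) ∩ Comp(g) is nonempty and is an input to g (i.e., g_I : Beh(g) → Beh(I) is surjective). For α ∈ ℒ(I) and negative β ∈ ℒ(Comp(g))^□: if f,𝒱 ⊭ α (some behaviour of f fails α) and g,𝒱 ⊨ ¬α → ¬β, then f⊗g,𝒱 ⊭ β. -/
import Mathlib


/-- A system: a set of behaviours `B` together with a map into component snapshots. -/
structure System (Comp : Type) (Beh : Comp → Type) where
  B : Type
  C : Set Comp
  f : B → (c : Comp) → c ∈ C → Beh c

variable {Comp : Type} {Beh : Comp → Type}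

/-- `σ` is an implementation of `g` in `f`: `Comp(g) ⊆ Comp(f)` and `f_{Comp(g)} = g ∘ σ`. -/
def Implements (f g : System Comp Beh) (σ : f.B → g.B) : Prop :=
  g.C ⊆ f.C ∧ ∀ (b : f.B) (c : Comp) (hg : c ∈ g.C) (hf : c ∈ f.C),
    f.f b c hf = g.f (σ b) c hg
/-- `(x,y)` is compatible: the interface is empty or `f_I(x) = g_I(y)`. -/
def Compatible (f g : System Comp Beh) (x : f.B) (y : g.B) : Prop :=
  f.C ∩ g.C = ∅ ∨
    ∀ (c : Comp) (hf : c ∈ f.C) (hg : c ∈ g.C), f.f x c hf = g.f y c hg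

open Classical in
/-- The canonical free composition `f ⊗ g`. -/
noncomputable def tensor (f g : System Comp Beh) : System Comp Beh where
  B := {p : f.B × g.B // Compatible f g p.1 p.2}
  C := f.C ∪ g.C
  f := fun p c hc =>
    if hf : c ∈ f.C then f.f p.val.1 c hf
    else g.f p.val.2 c (Or.resolve_left hc hf)
/-- Formulas of the modal logic `ℒ(C)^□` (atoms, ∧, ¬, □). -/
inductive Fml (Comp : Type) (Var : Comp → Type) : Type
  | atom (c : Comp) (p : Var c)
  | and (φ ψ : Fml Comp Var)
  | not (φ : Fml Comp Var)
  | box (φ : Fml Comp Var)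

variable {Var : Comp → Type}

/-- Satisfaction `f, 𝒱, x ⊨ φ`. -/
def Sat (V : (c : Comp) → Var c → Set (Beh c)) (f : System Comp Beh) :
    f.B → Fml Comp Var → Prop
  | x, .atom c p => ∃ hc : c ∈ f.C, f.f x c hc ∈ V c p
  | x, .and φ ψ => Sat V f x φ ∧ Sat V f x ψ
  | x, .not φ => ¬ Sat V f x φ
  | _, .box φ => ∀ y : f.B, Sat V f y φ

/-- The formula only uses atoms over the components in `C`. -/
def InLogic (C : Set Comp) : Fml Comp Var → Prop
  | .atom c _ => c ∈ C
  | .and φ ψ => InLogic C φ ∧ InLogic C ψ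
  | .not φ => InLogic C φ
  | .box φ => InLogic C φ

/-- Formulas of the elementary logic: no `□`. -/
def Elementary : Fml Comp Var → Prop
  | .atom _ _ => True
  | .and φ ψ => Elementary φ ∧ Elementary ψ
  | .not φ => Elementary φ
  | .box _ => False

/-- Classical implication `φ → ψ := ¬(φ ∧ ¬ψ)`. -/
def Fml.imp (φ ψ : Fml Comp Var) : Fml Comp Var := .not (.and φ (.not ψ))

/-- `f, 𝒱 ⊨ φ`: satisfaction at all behaviours. -/
def SatAll (V : (c : Comp) → Var c → Set (Beh c)) (f : System Comp Beh)
    (φ : Fml Comp Var) : Prop :=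
  ∀ x : f.B, Sat V f x φ
mutual
  /-- Positive: no `□` in the scope of an odd number of `¬`. -/
  def PosFml : Fml Comp Var → Prop
    | .atom _ _ => True
    | .and φ ψ => PosFml φ ∧ PosFml ψ
    | .not φ => NegFml φ
    | .box φ => PosFml φ
  /-- Negative: no `□` in the scope of an even number of `¬`. -/
  def NegFml : Fml Comp Var → Prop
    | .atom _ _ => True
    | .and φ ψ => NegFml φ ∧ NegFml ψ
    | .not φ => PosFml φ
    | .box _ => False
end

/-- Elementary formulas over a set of components are absolute between systems that
agree on those components. -/
lemma elem_absolute (V : (c : Comp) → Var c → Set (Beh c)) (f g : System Comp Beh)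
    (C : Set Comp) (hCf : C ⊆ f.C) (hCg : C ⊆ g.C) (x : f.B) (y : g.B)
    (hagree : ∀ (c : Comp) (hf : c ∈ f.C) (hg : c ∈ g.C), c ∈ C → f.f x c hf = g.f y c hg) :
    ∀ φ : Fml Comp Var, Elementary φ → InLogic C φ → (Sat V f x φ ↔ Sat V g y φ) := by
  intro φ
  induction φ with
  | atom c p =>
    intro _ hlog
    simp only [Sat]
    constructor
    · rintro ⟨hc, hv⟩
      exact ⟨hCg hlog, by rw [← hagree c hc (hCg hlog) hlog]; exact hv⟩
    · rintro ⟨hc, hv⟩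
      exact ⟨hCf hlog, by rw [hagree c (hCf hlog) hc hlog]; exact hv⟩
  | and φ ψ ihφ ihψ =>
    rintro ⟨h1, h2⟩ ⟨l1, l2⟩
    simp only [Sat]
    rw [ihφ h1 l1, ihψ h2 l2]
  | not φ ihφ =>
    intro h l
    simp only [Sat]
    rw [ihφ h l]
  | box φ _ =>
    intro h
    exact absurd h (by simp [Elementary])

/-- Directed absoluteness: positive formulas transfer from the implemented system to
the implementing one, negative formulas the other way. -/
lemma directed_absolute (V : (c : Comp) → Var c → Set (Beh c)) (f g : System Comp Beh)
    (σ : f.B → g.B) (himp : Implements f g σ) :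
    ∀ φ : Fml Comp Var, InLogic g.C φ → ∀ x : f.B,
      (PosFml φ → Sat V g (σ x) φ → Sat V f x φ) ∧
      (NegFml φ → Sat V f x φ → Sat V g (σ x) φ) := by
  intro φ
  induction φ with
  | atom c p =>
    intro hlog x
    have hf : c ∈ f.C := himp.1 hlog
    have he := himp.2 x c hlog hf
    constructor
    · rintro _ ⟨hc, hv⟩
      exact ⟨hf, by rw [he]; exact hv⟩
    · rintro _ ⟨hc, hv⟩
      exact ⟨hlog, by rw [← he]; exact hv⟩
  | and φ ψ ihφ ihψ =>
    rintro ⟨l1, l2⟩ x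
    constructor
    · rintro ⟨p1, p2⟩ ⟨s1, s2⟩
      exact ⟨(ihφ l1 x).1 p1 s1, (ihψ l2 x).1 p2 s2⟩
    · rintro ⟨p1, p2⟩ ⟨s1, s2⟩
      exact ⟨(ihφ l1 x).2 p1 s1, (ihψ l2 x).2 p2 s2⟩
  | not φ ihφ =>
    intro hlog x
    constructor
    · intro hp hs hc
      exact hs ((ihφ hlog x).2 hp hc)
    · intro hp hs hc
      exact hs ((ihφ hlog x).1 hp hc)
  | box φ ihφ =>
    intro hlog x
    constructor
    · intro hp hs y
      exact (ihφ hlog y).1 hp (hs (σ y))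
    · intro hp
      exact absurd hp (by simp [NegFml])

/-- Local reasoning III: if the interface `I = Comp(f) ∩ Comp(g)`
is nonempty and is an input to `g` (the projection `g_I` is surjective), `α ∈ ℒ(I)`,
`β` a negative formula of `ℒ(Comp(g))^□`, some behaviour of `f` fails `α`, and
`g,𝒱 ⊨ ¬α → ¬β`, then some behaviour of `f ⊗ g` fails `β`. -/
theorem local_reasoning_III (V : (c : Comp) → Var c → Set (Beh c))
    (f g : System Comp Beh)
    (hI : (f.C ∩ g.C).Nonempty)
    (hinput : ∀ b : (c : Comp) → c ∈ f.C ∩ g.C → Beh c,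
      ∃ y : g.B, ∀ (c : Comp) (hc : c ∈ f.C ∩ g.C), g.f y c hc.2 = b c hc)
    (α β : Fml Comp Var)
    (hαel : Elementary α) (hαlog : InLogic (f.C ∩ g.C) α)
    (hβneg : NegFml β) (hβlog : InLogic g.C β)
    (hfα : ∃ x : f.B, ¬ Sat V f x α)
    (hgαβ : SatAll V g (Fml.imp (.not α) (.not β))) :
    ∃ p : (tensor f g).B, ¬ Sat V (tensor f g) p β := by
  classical
  obtain ⟨x, hx⟩ := hfα
  obtain ⟨y, hy⟩ := hinput (fun c hc => f.f x c hc.1)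
  have hcomp : Compatible f g x y := by
    right
    intro c hf hg
    exact (hy c ⟨hf, hg⟩).symm
  set p : (tensor f g).B := ⟨(x, y), hcomp⟩ with hp
  -- y fails α by absoluteness
  have hyα : ¬ Sat V g y α := by
    intro h
    exact hx ((elem_absolute V f g (f.C ∩ g.C) (fun c hc => hc.1) (fun c hc => hc.2) x y
      (fun c hf hg hc => (hy c hc).symm) α hαel hαlog).mpr h)
  -- from the implication, y fails β
  have hyβ : ¬ Sat V g y β := by
    have := hgαβ y
    simp only [Fml.imp, Sat] at this
    intro hβ
    exact this ⟨hyα, fun h => h hβ⟩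
  -- π₂ implements g in the tensor
  have himp : Implements (tensor f g) g (fun q => q.val.2) := by
    constructor
    · intro c hc
      exact Or.inr hc
    · intro b c hg hf
      show (if h : c ∈ f.C then f.f b.val.1 c h else g.f b.val.2 c _) = _
      split
      · next h =>
        rcases b.property with habs | hcompat
        · exact absurd (habs ▸ (⟨h, hg⟩ : c ∈ f.C ∩ g.C)) (Set.notMem_empty c)
        · exact hcompat c h hg
      · rfl
  refine ⟨p, fun hβ => hyβ ?_⟩
  exact (directed_absolute V (tensor f g) g (fun q => q.val.2) himp β hβlog p).2 hβneg hβ
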